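/- If P and Q are coprime integers such that U_12(P,Q) is a nonzero perfect square, then there exists δ ∈ {1, −1, 2, −2} and nonzero integers a, b with P·(P²−3Q)·(P²−Q) = δ·a² and (P²−2Q)·(P⁴−4P²Q+Q²) = δ·b². -/

import Mathlib

def lucasU (P Q : ℤ) : ℕ → ℤ
  | 0 => 0
  | 1 => 1
  | (n + 2) => P * lucasU P Q (n + 1) - Q * lucasU P Q n

lemma two_dvd_of_prime_dvd_two {p : ℤ} (hp : Prime p) (hd : p ∣ 2) : 2 ∣ p := by
  have h1 : p.natAbs ∣ (2:ℤ).natAbs := Int.natAbs_dvd_natAbs.mpr hd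
  have h2 : p.natAbs.Prime := Int.prime_iff_natAbs_prime.mp hp
  have h3 : p.natAbs = 2 := (Nat.prime_dvd_prime_iff_eq h2 Nat.prime_two).mp h1
  have h4 : (p.natAbs : ℤ) ∣ p := Int.natAbs_dvd.mpr dvd_rfl
  rw [h3] at h4
  exact_mod_cast h4

lemma cop_of_no_prime {A B : ℤ} (hnp : ∀ p : ℤ, Prime p → p ∣ A → p ∣ B → False) :
    IsCoprime A B := by
  rw [Int.isCoprime_iff_gcd_eq_one]
  by_contra hg
  rcases Nat.eq_zero_or_pos (Int.gcd A B) with h0 | hpos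
  · obtain ⟨hA0, hB0⟩ := Int.gcd_eq_zero_iff.mp h0
    exact hnp 2 Int.prime_two (hA0 ▸ dvd_zero 2) (hB0 ▸ dvd_zero 2)
  · obtain ⟨p, hp, hpd⟩ := Nat.exists_prime_and_dvd hg
    have hpa : (p:ℤ) ∣ A := dvd_trans (Int.natCast_dvd_natCast.mpr hpd) (Int.gcd_dvd_left A B)
    have hpb : (p:ℤ) ∣ B := dvd_trans (Int.natCast_dvd_natCast.mpr hpd) (Int.gcd_dvd_right A B)
    exact hnp p (Nat.prime_iff_prime_int.mp hp) hpa hpb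

lemma sq_helper {A B c : ℤ} (hA : A ≠ 0) (hB : B ≠ 0) (hco : IsCoprime A B)
    (hab : A * B = c ^ 2) :
    ∃ a b : ℤ, a ≠ 0 ∧ b ≠ 0 ∧ ((A = a ^ 2 ∧ B = b ^ 2) ∨ (A = -a ^ 2 ∧ B = -b ^ 2)) := by
  obtain ⟨a, ha⟩ := Int.sq_of_isCoprime hco hab
  obtain ⟨b, hb⟩ := Int.sq_of_isCoprime hco.symm (by rwa [mul_comm])
  have ha0 : a ≠ 0 := by rintro rfl; rcases ha with h1 | h1 <;> simp [h1] at hA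
  have hb0 : b ≠ 0 := by rintro rfl; rcases hb with h1 | h1 <;> simp [h1] at hB
  refine ⟨a, b, ha0, hb0, ?_⟩
  rcases ha with h1 | h1 <;> rcases hb with h2 | h2
  · exact Or.inl ⟨h1, h2⟩
  · exfalso
    have : c ^ 2 = -(a * b) ^ 2 := by rw [← hab, h1, h2]; ring
    have hpos : (0:ℤ) < (a * b) ^ 2 := by positivity
    nlinarith [sq_nonneg c]
  · exfalso
    have : c ^ 2 = -(a * b) ^ 2 := by rw [← hab, h1, h2]; ring
    have hpos : (0:ℤ) < (a * b) ^ 2 := by positivity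
    nlinarith [sq_nonneg c]
  · exact Or.inr ⟨h1, h2⟩

theorem stmt_3 (P Q : ℤ) (h : IsCoprime P Q) (hne : lucasU P Q 12 ≠ 0)
    (hsq : IsSquare (lucasU P Q 12)) :
    ∃ δ ∈ ({1, -1, 2, -2} : Set ℤ), ∃ a b : ℤ, a ≠ 0 ∧ b ≠ 0 ∧
      P * (P ^ 2 - 3 * Q) * (P ^ 2 - Q) = δ * a ^ 2 ∧
      (P ^ 2 - 2 * Q) * (P ^ 4 - 4 * P ^ 2 * Q + Q ^ 2) = δ * b ^ 2 := by
  set A : ℤ := P * (P ^ 2 - 3 * Q) * (P ^ 2 - Q) with hAdef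
  set B : ℤ := (P ^ 2 - 2 * Q) * (P ^ 4 - 4 * P ^ 2 * Q + Q ^ 2) with hBdef
  have h12 : lucasU P Q 12 = A * B := by
    simp only [lucasU, hAdef, hBdef]; ring
  obtain ⟨r, hr⟩ := hsq
  have hAB : A * B = r ^ 2 := by rw [← h12, hr]; ring
  rw [h12] at hne
  have hA0 : A ≠ 0 := left_ne_zero_of_mul hne
  have hB0 : B ≠ 0 := right_ne_zero_of_mul hne
  -- common prime divisors of A and B divide 2
  have key : ∀ p : ℤ, Prime p → p ∣ A → p ∣ B → p ∣ 2 := by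
    intro p hp hpA hpB
    by_contra h2
    have h4 : p ∣ 4 * Q ^ 6 := by
      have hid : 4 * Q ^ 6 = B * B - (A * A) * (P ^ 2 - 4 * Q) := by
        rw [hAdef, hBdef]; ring
      rw [hid]
      exact dvd_sub (hpB.mul_left B) ((hpA.mul_left A).mul_right _)
    have hQ : p ∣ Q := by
      rcases hp.dvd_mul.mp h4 with h5 | h5
      · exact absurd (hp.dvd_of_dvd_pow (show p ∣ (2:ℤ) ^ 2 by norm_num; exact h5)) h2
      · exact hp.dvd_of_dvd_pow h5
    have hP : p ∣ P := by
      apply hp.dvd_of_dvd_pow (n := 5)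
      have hid : P ^ 5 = A - Q * (3 * P * Q - 4 * P ^ 3) := by rw [hAdef]; ring
      rw [hid]
      exact dvd_sub hpA (hQ.mul_right _)
    exact hp.not_unit (h.isUnit_of_dvd' hP hQ)
  by_cases hB2 : (2:ℤ) ∣ B
  · -- even case: A = 2n, B = 2(2m+1)
    have hQ1 : ¬ (2:ℤ) ∣ Q := by
      rintro ⟨l, hl⟩
      rcases Int.even_or_odd P with ⟨k, hk⟩ | ⟨k, hk⟩
      · exact Int.prime_two.not_unit
          (h.isUnit_of_dvd' ⟨k, by linarith⟩ ⟨l, hl⟩)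
      · obtain ⟨m, hm⟩ := hB2
        have hodd : B = 2 * (-6*l + 18*l^2 - 8*l^3 + 6*k - 48*k*l + 72*k*l^2 + 30*k^2
            - 144*k^2*l + 72*k^2*l^2 + 80*k^3 - 192*k^3*l + 120*k^4 - 96*k^4*l
            + 96*k^5 + 32*k^6) + 1 := by
          rw [hBdef, hk, hl]; ring
        omega
    obtain ⟨l, hl⟩ : ∃ l, Q = 2 * l + 1 := by
      rcases Int.even_or_odd Q with ⟨l, hl⟩ | ⟨l, hl⟩
      · exact absurd ⟨l, by linarith⟩ hQ1
      · exact ⟨l, hl⟩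
    have hstruct : (∃ m, B = 4 * m + 2) ∧ (∃ n, A = 2 * n) := by
      rcases Int.even_or_odd P with ⟨k, hk⟩ | ⟨k, hk⟩
      · constructor
        · exact ⟨-1 - 3*l - 6*l^2 - 4*l^3 + 9*k^2 + 36*k^2*l + 36*k^2*l^2 - 24*k^4
            - 48*k^4*l + 16*k^6, by rw [hBdef, hk, hl]; ring⟩
        · exact ⟨k * ((k+k)^2 - 3*Q) * ((k+k)^2 - Q), by rw [hAdef, hk]; ring⟩
      · constructor
        · exact ⟨3*l + 3*l^2 - 4*l^3 + 12*k*l + 36*k*l^2 - 12*k^2 - 36*k^2*l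
            + 36*k^2*l^2 - 8*k^3 - 96*k^3*l + 36*k^4 - 48*k^4*l + 48*k^5 + 16*k^6,
            by rw [hBdef, hk, hl]; ring⟩
        · exact ⟨2*l + 6*l^2 - 4*k - 12*k*l + 12*k*l^2 - 4*k^2 - 48*k^2*l + 24*k^3
            - 32*k^3*l + 40*k^4 + 16*k^5, by rw [hAdef, hk, hl]; ring⟩
    obtain ⟨⟨m, hm⟩, ⟨n, hn⟩⟩ := hstruct
    have hr2 : (2:ℤ) ∣ r := by
      apply Int.prime_two.dvd_of_dvd_pow (n := 2)
      rw [← hAB, hn, hm]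
      exact ⟨n * (4 * m + 2), by ring⟩
    obtain ⟨s, hs⟩ := hr2
    have hkey : n * (2 * m + 1) = s ^ 2 := by
      have h4 : 4 * (n * (2 * m + 1)) = 4 * s ^ 2 := by
        have := hAB
        rw [hn, hm, hs] at this
        linarith [this]
      linarith
    have hn0 : n ≠ 0 := by rintro rfl; simp at hn; exact hA0 hn
    have hm0 : 2 * m + 1 ≠ 0 := by omega
    have hcop : IsCoprime n (2 * m + 1) := by
      apply cop_of_no_prime
      intro p hp hpn hpm
      have hpA : p ∣ A := hn ▸ hpn.mul_left 2
      have hpB : p ∣ B := by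
        rw [hm]
        exact Dvd.dvd.mul_left hpm 2 |>.trans ⟨1, by ring⟩
      have h2p := two_dvd_of_prime_dvd_two hp (key p hp hpA hpB)
      have : (2:ℤ) ∣ 2 * m + 1 := h2p.trans hpm
      omega
    obtain ⟨a, b, ha0, hb0, hcase⟩ := sq_helper hn0 hm0 hcop hkey
    rcases hcase with ⟨h1, h2⟩ | ⟨h1, h2⟩
    · exact ⟨2, by norm_num, a, b, ha0, hb0, by rw [hn, h1]; try ring,
        by rw [hm]; linarith [h2]⟩
    · exact ⟨-2, by norm_num, a, b, ha0, hb0, by rw [hn, h1]; try ring,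
        by rw [hm]; linarith [h2]⟩
  · -- odd case: A, B coprime
    have hcop : IsCoprime A B := by
      apply cop_of_no_prime
      intro p hp hpA hpB
      exact hB2 ((two_dvd_of_prime_dvd_two hp (key p hp hpA hpB)).trans hpB)
    obtain ⟨a, b, ha0, hb0, hcase⟩ := sq_helper hA0 hB0 hcop hAB
    rcases hcase with ⟨h1, h2⟩ | ⟨h1, h2⟩
    · exact ⟨1, by norm_num, a, b, ha0, hb0, by rw [h1]; try ring,
        by rw [h2]; try ring⟩
    · exact ⟨-1, by norm_num, a, b, ha0, hb0, by rw [h1]; try ring,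
        by rw [h2]; try ring⟩
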